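/- For all natural numbers i, j, k₂ and real k₁, b_{i,j,k₁+k₂} = Σ_{r=0}^{k₂} C(k₂,r) · b_{i,j+r,k₁}. -/

import Mathlib

open Finset

noncomputable def msn (i j : ℕ) (k : ℝ) : ℝ :=
  ∑ r ∈ Finset.range (j + 1), (j.choose r : ℝ) * (-1 : ℝ) ^ (j - r) * ((r : ℝ) + k) ^ i

lemma msn_succ (i j : ℕ) (k : ℝ) : msn i (j+1) k = msn i j (k+1) - msn i j k := by
  unfold msn
  rw [Finset.sum_range_succ' _ (j+1)]
  have e1 : ∀ r ∈ Finset.range (j+1),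
      (((j+1).choose (r+1) : ℝ)) * (-1:ℝ)^(j+1-(r+1)) * (((r+1:ℕ):ℝ) + k)^i
      = (j.choose r : ℝ) * (-1:ℝ)^(j-r) * ((r:ℝ) + (k+1))^i
        + (j.choose (r+1) : ℝ) * (-1:ℝ)^(j-r) * (((r+1:ℕ):ℝ) + k)^i := by
    intro r hr
    rw [Nat.succ_sub_succ, Nat.choose_succ_succ]
    push_cast
    ring
  rw [Finset.sum_congr rfl e1, Finset.sum_add_distrib]
  have e2 : (∑ r ∈ Finset.range (j+1),
      (j.choose (r+1) : ℝ) * (-1:ℝ)^(j-r) * (((r+1:ℕ):ℝ) + k)^i)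
      + ((j+1).choose 0 : ℝ) * (-1:ℝ)^(j+1-0) * (((0:ℕ):ℝ) + k)^i
      = - ∑ r ∈ Finset.range (j+1), (j.choose r : ℝ) * (-1:ℝ)^(j-r) * ((r:ℝ) + k)^i := by
    have := (Finset.sum_range_succ' (fun r => (j.choose r : ℝ) * (-1:ℝ)^(j+1-r) * ((r:ℝ) + k)^i) (j+1)).symm
    simp only [Nat.succ_sub_succ] at this
    have e3 : (∑ r ∈ Finset.range (j+1),
        (j.choose (r+1) : ℝ) * (-1:ℝ)^(j-r) * (((r+1:ℕ):ℝ) + k)^i)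
        + ((j+1).choose 0 : ℝ) * (-1:ℝ)^(j+1-0) * (((0:ℕ):ℝ) + k)^i
        = ∑ r ∈ Finset.range (j+2), (j.choose r : ℝ) * (-1:ℝ)^(j+1-r) * ((r:ℝ) + k)^i := by
      rw [← this]
      push_cast
      ring_nf
      simp
      exact Finset.sum_congr rfl (fun x _ => by ring)
    rw [e3, Finset.sum_range_succ]
    simp only [Nat.choose_succ_self, Nat.cast_zero, zero_mul, add_zero]
    rw [← Finset.sum_neg_distrib]
    apply Finset.sum_congr rfl
    intro r hr
    have hr' : r ≤ j := Nat.lt_succ_iff.mp (Finset.mem_range.mp hr)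
    rw [Nat.succ_sub hr', pow_succ]
    ring
  rw [add_assoc, e2]; ring

lemma aux (F : ℕ → ℕ → ℝ) (h : ∀ c j, F (c+1) j = F c j + F c (j+1)) :
    ∀ c j, F c j = ∑ r ∈ Finset.range (c+1), (c.choose r : ℝ) * F 0 (j+r) := by
  intro c
  induction c with
  | zero => intro j; simp
  | succ c ih =>
    intro j
    rw [h, ih j, ih (j+1)]
    rw [Finset.sum_range_succ' (fun r => ((c+1).choose r : ℝ) * F 0 (j+r)) (c+1)]
    simp only [Nat.choose_succ_succ, Nat.cast_add, add_mul, Finset.sum_add_distrib]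
    have h1 : ∑ r ∈ Finset.range (c+1), (c.choose (r+1) : ℝ) * F 0 (j+(r+1))
        + ((c+1).choose 0 : ℝ) * F 0 (j+0)
        = ∑ r ∈ Finset.range (c+1), (c.choose r : ℝ) * F 0 (j+r) := by
      have t := (Finset.sum_range_succ' (fun r => (c.choose r : ℝ) * F 0 (j+r)) (c+1)).symm
      simp only [Nat.choose_zero_right, Nat.cast_one] at t ⊢
      rw [t, Finset.sum_range_succ]
      simp
    have h2 : ∑ r ∈ Finset.range (c+1), (c.choose r : ℝ) * F 0 (j+(r+1))
        = ∑ r ∈ Finset.range (c+1), (c.choose r : ℝ) * F 0 (j+1+r) := by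
      apply Finset.sum_congr rfl; intro r hr; ring_nf
    linarith [h1, h2]

theorem stmt (i j k₂ : ℕ) (k₁ : ℝ) : msn i j (k₁ + k₂) = ∑ r ∈ Finset.range (k₂ + 1), (k₂.choose r : ℝ) * msn i (j + r) k₁ := by
  have h := aux (fun c j' => msn i j' (k₁ + c)) (by
    intro c j'
    have := msn_succ i j' (k₁ + c)
    push_cast
    rw [show k₁ + ((c:ℝ)+1) = (k₁ + c) + 1 by ring]
    linarith) k₂ j
  simp only [Nat.cast_zero, add_zero] at h
  exact h
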